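/- Let Σ=(Γ=(V,E),σ) be a signed graph and n ≥ 1 an integer. Then the number χ_Σ(2n+1) of proper n-colorings of Σ satisfies χ_Σ(2n+1) = (−1)^{|V|−k(Γ)} · (2n+1)^{k(Γ)} · T_Σ(−2n, 0, 2n/(2n+1)), and the number χ*_Σ(2n) of proper non-zero n-colorings of Σ satisfies χ*_Σ(2n) = (−1)^{|V|−k(Γ)} · (2n)^{k(Γ)} · T_Σ(1−2n, 0, 1), where k(Γ) is the number of connected components of Γ. -/

import Mathlib

attribute [local instance] Classical.propDecidable

noncomputable section SignedGraphs

/-- A signed graph: a multigraph with ordered pairs of endpoints (the order is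
an artefact of the encoding) together with a sign `±1` on each edge. -/
structure SGraph (V : Type*) (E : Type*) where
  ends : E → V × V
  sign : E → ℤˣ

namespace SGraph

variable {V E : Type*}

/-- Endpoint of `e` on side `b`; a loop has both endpoints equal, but its two
half-edges are distinguished by the side `b`. -/
def endpt (Γ : SGraph V E) (e : E) (b : Bool) : V :=
  cond b (Γ.ends e).1 (Γ.ends e).2

/-- `e` is a loop of the underlying graph. -/
def IsLoop (Γ : SGraph V E) (e : E) : Prop := (Γ.ends e).1 = (Γ.ends e).2

/-- Walks in a signed multigraph: a step traverses an edge `e` in direction `d`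
(from the side-`d` endpoint to the other endpoint). -/
inductive Walk (Γ : SGraph V E) : V → V → Type _
  | nil (v : V) : Walk Γ v v
  | cons (e : E) (d : Bool) {w : V} (p : Walk Γ (Γ.endpt e (!d)) w) : Walk Γ (Γ.endpt e d) w

namespace Walk

variable {Γ : SGraph V E}

/-- The list of vertices visited by a walk (including the final one). -/
def verts : ∀ {u v : V}, Γ.Walk u v → List V
  | _, _, .nil x => [x]
  | _, _, .cons e d p => Γ.endpt e d :: p.verts

/-- The list of edges traversed by a walk. -/
def edges : ∀ {u v : V}, Γ.Walk u v → List E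
  | _, _, .nil _ => []
  | _, _, .cons e _ p => e :: p.edges

/-- The list of (edge, direction) steps of a walk. -/
def steps : ∀ {u v : V}, Γ.Walk u v → List (E × Bool)
  | _, _, .nil _ => []
  | _, _, .cons e d p => (e, d) :: p.steps

/-- The sources of the steps of a walk, i.e. all visited vertices except the last. -/
def srcs {u v : V} (W : Γ.Walk u v) : List V := W.verts.dropLast

/-- The sign of a walk: the product of the signs of its edges. -/
def sgn : ∀ {u v : V}, Γ.Walk u v → ℤˣ
  | _, _, .nil _ => 1
  | _, _, .cons e _ p => Γ.sign e * p.sgn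

/-- Concatenation of walks. -/
def append : ∀ {u v w : V}, Γ.Walk u v → Γ.Walk v w → Γ.Walk u w
  | _, _, _, .nil _, q => q
  | _, _, _, .cons e d p, q => .cons e d (p.append q)

/-- The sum `Σᵢ f(eᵢ)` of the values of `f` on the edges of the walk,
with multiplicity. -/
def edgeSum {G : Type*} [AddCommGroup G] (f : E → G) {u v : V} (W : Γ.Walk u v) : G :=
  (W.edges.map f).sum

/-- The sum `Σᵢ ω(vᵢ,eᵢ)·(Π_{j<i} σ(eⱼ))·f(eᵢ)` along a walk, where `ω(vᵢ,eᵢ)`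
is the value of `ω` on the half-edge by which the walk leaves `vᵢ`. -/
def tensionSum {G : Type*} [AddCommGroup G] (ω : E → Bool → ℤˣ) (f : E → G) :
    ∀ {u v : V}, Γ.Walk u v → G
  | _, _, .nil _ => 0
  | _, _, .cons e d p => ((ω e d : ℤ) • f e) + ((Γ.sign e : ℤ) • tensionSum ω f p)

/-- `Q` is the reverse of the walk `P`. -/
def IsReverseOf {u v : V} (Q : Γ.Walk v u) (P : Γ.Walk u v) : Prop :=
  Q.steps = P.steps.reverse.map fun s => (s.1, !s.2)

end Walk

/-- A closed walk is a cycle if it is nontrivial, visits no vertex twice and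
uses no edge twice. -/
def IsCycle (Γ : SGraph V E) {v : V} (W : Γ.Walk v v) : Prop :=
  W.edges ≠ [] ∧ W.srcs.Nodup ∧ W.edges.Nodup

/-- A balanced (positive) cycle. -/
def IsBalancedCycle (Γ : SGraph V E) {v : V} (W : Γ.Walk v v) : Prop :=
  Γ.IsCycle W ∧ W.sgn = 1

/-- An unbalanced (negative) cycle. -/
def IsUnbalancedCycle (Γ : SGraph V E) {v : V} (W : Γ.Walk v v) : Prop :=
  Γ.IsCycle W ∧ W.sgn = -1

/-- A nontrivial walk that is a simple path (all visited vertices distinct). -/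
def IsPathWalk (Γ : SGraph V E) {u v : V} (P : Γ.Walk u v) : Prop :=
  P.edges ≠ [] ∧ P.verts.Nodup

/-- A tight handcuff at `v`: two edge-disjoint unbalanced cycles sharing exactly
the vertex `v`. -/
def IsTightHandcuff (Γ : SGraph V E) {v : V} (C₁ C₂ : Γ.Walk v v) : Prop :=
  Γ.IsUnbalancedCycle C₁ ∧ Γ.IsUnbalancedCycle C₂ ∧
    (∀ x ∈ C₁.srcs, x ∈ C₂.srcs → x = v) ∧ ∀ e ∈ C₁.edges, e ∉ C₂.edges

/-- A loose handcuff: two vertex-disjoint unbalanced cycles `C₁` (at `u`) and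
`C₂` (at `w`) joined by a simple path `P` from `u` to `w` meeting the cycles
exactly in its endpoints. -/
def IsLooseHandcuff (Γ : SGraph V E) {u w : V} (C₁ : Γ.Walk u u) (P : Γ.Walk u w)
    (C₂ : Γ.Walk w w) : Prop :=
  Γ.IsUnbalancedCycle C₁ ∧ Γ.IsUnbalancedCycle C₂ ∧ Γ.IsPathWalk P ∧
    (∀ x ∈ C₁.srcs, x ∉ C₂.srcs) ∧
    (∀ x ∈ P.verts, x ∈ C₁.srcs → x = u) ∧
    (∀ x ∈ P.verts, x ∈ C₂.srcs → x = w) ∧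
    ∀ e ∈ P.edges, e ∉ C₁.edges ∧ e ∉ C₂.edges

/-- The canonical closed walks traversing a circuit of the signed graph:
a balanced cycle, a tight handcuff `C₁ * C₂`, or a loose handcuff
`C₁ * P * C₂ * P⁻¹` (the circuit path edges being used twice). -/
def IsBasicCircuitWalk (Γ : SGraph V E) {v : V} (W : Γ.Walk v v) : Prop :=
  Γ.IsBalancedCycle W ∨
    (∃ C₁ C₂ : Γ.Walk v v, Γ.IsTightHandcuff C₁ C₂ ∧ W = C₁.append C₂) ∨
    ∃ (w : V) (C₁ : Γ.Walk v v) (P : Γ.Walk v w) (C₂ : Γ.Walk w w) (Q : Γ.Walk w v),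
      Γ.IsLooseHandcuff C₁ P C₂ ∧ Q.IsReverseOf P ∧
        W = C₁.append (P.append (C₂.append Q))

/-- A circuit walk: a rotation of a basic circuit walk. -/
def IsCircuitWalk (Γ : SGraph V E) {v : V} (W : Γ.Walk v v) : Prop :=
  ∃ (u : V) (A : Γ.Walk u v) (B : Γ.Walk v u),
    W = B.append A ∧ Γ.IsBasicCircuitWalk (A.append B)

/-- `e` is a circuit path edge: it lies on the connecting path of an unbalanced
loose handcuff. -/
def IsCircuitPathEdge (Γ : SGraph V E) (e : E) : Prop :=
  ∃ (u w : V) (C₁ : Γ.Walk u u) (P : Γ.Walk u w) (C₂ : Γ.Walk w w),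
    Γ.IsLooseHandcuff C₁ P C₂ ∧ e ∈ P.edges

/-- Adjacency via an edge. -/
def Adj (Γ : SGraph V E) (a b : V) : Prop := ∃ e, Γ.ends e = (a, b) ∨ Γ.ends e = (b, a)

/-- The set of connected components. -/
def Components (Γ : SGraph V E) : Type _ := Quot Γ.Adj

/-- The connected component of a vertex. -/
def comp (Γ : SGraph V E) (v : V) : Γ.Components := Quot.mk _ v

/-- The number `k(Γ)` of connected components. -/
def kAll (Γ : SGraph V E) : ℕ := Nat.card Γ.Components

/-- A connected component is balanced if every cycle it contains is balanced. -/
def IsBalancedComponent (Γ : SGraph V E) (c : Γ.Components) : Prop :=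
  ∀ v : V, Γ.comp v = c → ∀ W : Γ.Walk v v, Γ.IsCycle W → W.sgn = 1

/-- The number `k_b(Σ)` of balanced connected components. -/
def kb (Γ : SGraph V E) : ℕ := Nat.card {c : Γ.Components // Γ.IsBalancedComponent c}

/-- The number `k_u(Σ)` of unbalanced connected components. -/
def ku (Γ : SGraph V E) : ℕ := Nat.card {c : Γ.Components // ¬ Γ.IsBalancedComponent c}

/-- A signed graph is balanced if all its cycles are balanced. -/
def Balanced (Γ : SGraph V E) : Prop :=
  ∀ (v : V) (W : Γ.Walk v v), Γ.IsCycle W → W.sgn = 1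

/-- A signed graph is connected if it has exactly one connected component. -/
def Connected (Γ : SGraph V E) : Prop := Γ.kAll = 1

/-- The spanning subgraph `Σ \ Aᶜ` with edge set `A`. -/
def restrict (Γ : SGraph V E) (A : Set E) : SGraph V A :=
  { ends := fun e => Γ.ends e, sign := fun e => Γ.sign e }

/-- The signed Tutte polynomial (as a function of `x`, `y`, `z`):
`T_Σ(X,Y,Z) = Σ_{A⊆E} (X−1)^{k(Σ\Aᶜ)−k(Σ)} (Y−1)^{|A|−|V|+k_b(Σ\Aᶜ)} (Z−1)^{k_u(Σ\Aᶜ)}`. -/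
def signedTutte {K : Type*} [CommRing K] (Γ : SGraph V E) (x y z : K) : K :=
  ∑ᶠ A : Finset E,
    (x - 1) ^ ((Γ.restrict (A : Set E)).kAll - Γ.kAll) *
      (y - 1) ^ ((A.card + (Γ.restrict (A : Set E)).kb) - Nat.card V) *
        (z - 1) ^ (Γ.restrict (A : Set E)).ku

/-- Deletion of an edge. -/
def deleteEdge (Γ : SGraph V E) (e : E) : SGraph V {e' : E // e' ≠ e} :=
  { ends := fun e' => Γ.ends e'.1, sign := fun e' => Γ.sign e'.1 }

/-- The relation identifying the two endpoints of `e`. -/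
def contractRel (Γ : SGraph V E) (e : E) (a b : V) : Prop := (a, b) = Γ.ends e

/-- Contraction of an edge: the two endpoints are identified and the edge is
deleted.  (For a loop this is just deletion, as the identification is trivial.) -/
def contract (Γ : SGraph V E) (e : E) : SGraph (Quot (Γ.contractRel e)) {e' : E // e' ≠ e} :=
  { ends := fun e' => (Quot.mk _ (Γ.ends e'.1).1, Quot.mk _ (Γ.ends e'.1).2),
    sign := fun e' => Γ.sign e'.1 }

/-- `e` is a bridge: its deletion increases the number of connected components. -/
def IsBridge (Γ : SGraph V E) (e : E) : Prop := Γ.kAll < (Γ.deleteEdge e).kAll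

/-- An orientation of the half-edges, compatible with the signature. -/
def IsCompatible (Γ : SGraph V E) (ω : E → Bool → ℤˣ) : Prop :=
  ∀ e, Γ.sign e = -(ω e true * ω e false)

/-- A `G`-flow: Kirchhoff's law holds at every vertex. -/
def IsFlow (Γ : SGraph V E) (ω : E → Bool → ℤˣ) {G : Type*} [AddCommGroup G]
    (f : E → G) : Prop :=
  ∀ v : V,
    (∑ᶠ e : E, ((if Γ.endpt e true = v then (ω e true : ℤ) • f e else 0) +
      (if Γ.endpt e false = v then (ω e false : ℤ) • f e else 0))) = 0

/-- A `G`-tension: the alternating sum along every circuit walk vanishes. -/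
def IsTension (Γ : SGraph V E) (ω : E → Bool → ℤˣ) {G : Type*} [AddCommGroup G]
    (f : E → G) : Prop :=
  ∀ (v : V) (W : Γ.Walk v v), Γ.IsCircuitWalk W → W.tensionSum ω f = 0

end SGraph

/-- The doubling homomorphism `x ↦ x + x = 2x` of an abelian group. -/
def doubleHom (G : Type*) [AddCommGroup G] : G →+ G :=
  AddMonoidHom.mk' (fun x => x + x) (fun a b => add_add_add_comm a b a b)

/-- The subgroup `2G = {2x : x ∈ G}`. -/
def twoG (G : Type*) [AddCommGroup G] : AddSubgroup G := (doubleHom G).range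

/-- The `2`-torsion subgroup `G₂ = {x ∈ G : 2x = 0}`. -/
def torsion2 (G : Type*) [AddCommGroup G] : AddSubgroup G := (doubleHom G).ker

namespace SGraph

variable {V E : Type*}

/-- A `G`-potential difference: a `G`-tension whose sum around every unbalanced
cycle lies in `2G`. -/
def IsPotentialDifference (Γ : SGraph V E) (ω : E → Bool → ℤˣ) {G : Type*} [AddCommGroup G]
    (f : E → G) : Prop :=
  Γ.IsTension ω f ∧
    ∀ (v : V) (W : Γ.Walk v v), Γ.IsUnbalancedCycle W → W.edgeSum f ∈ twoG G

end SGraph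

namespace SGraph

variable {V E : Type*}

/-- Proper coloring by elements of a set `X` with involution `ι`: adjacent
endpoints of a positive edge get different colors, and for a negative edge the
`ι`-image of one endpoint's color differs from the other endpoint's color. -/
def IsProperInvColoring (Γ : SGraph V E) {X : Type*} (ι : X → X) (f : V → X) : Prop :=
  ∀ e : E, (Γ.sign e = 1 → f ((Γ.ends e).1) ≠ f ((Γ.ends e).2)) ∧
    (Γ.sign e = -1 → ι (f ((Γ.ends e).1)) ≠ f ((Γ.ends e).2))

/-- A proper `G`-coloring: for every edge `e = uv`, `f(u) ≠ f(v)` if `e` is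
positive and `-f(u) ≠ f(v)` if `e` is negative, i.e. `σ(e)•f(u) ≠ f(v)`. -/
def IsProperColoring (Γ : SGraph V E) {G : Type*} [AddCommGroup G] (f : V → G) : Prop :=
  ∀ e : E, ((Γ.sign e : ℤ) • f ((Γ.ends e).1)) ≠ f ((Γ.ends e).2)

/-- Zaslavsky's proper `n`-coloring: colors in `{0, ±1, …, ±n}` with
`f(u) ≠ σ(e)·f(v)` for every edge `e = uv`. -/
def IsProperNColoring (Γ : SGraph V E) (n : ℕ) (f : V → ℤ) : Prop :=
  (∀ v, |f v| ≤ (n : ℤ)) ∧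
    ∀ e : E, f ((Γ.ends e).1) ≠ (Γ.sign e : ℤ) * f ((Γ.ends e).2)

/-- `T ⊆ E` is a spanning tree: the spanning subgraph `(V,T)` is connected and
contains no cycle. -/
def IsSpanningTree (Γ : SGraph V E) (T : Set E) : Prop :=
  (Γ.restrict T).Connected ∧
    ∀ (v : V) (W : (Γ.restrict T).Walk v v), ¬ (Γ.restrict T).IsCycle W

/-- A connected basis of a connected signed graph: a spanning tree if `Σ` is
balanced; otherwise a spanning tree plus one extra edge closing an unbalanced
cycle. -/
def IsConnectedBasis (Γ : SGraph V E) (B : Set E) : Prop :=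
  (Γ.Balanced ∧ Γ.IsSpanningTree B) ∨
    (¬ Γ.Balanced ∧ ∃ (T : Set E) (e : E), Γ.IsSpanningTree T ∧ e ∉ T ∧ B = insert e T ∧
      ∀ (v : V) (W : (Γ.restrict B).Walk v v), (Γ.restrict B).IsCycle W → W.sgn = -1)

/-- Switching at a vertex `v`: the sign of every non-loop edge incident with `v`
is negated; loops keep their sign. -/
def switchAt (Γ : SGraph V E) (v : V) : SGraph V E :=
  { ends := Γ.ends,
    sign := fun e => if ((Γ.ends e).1 = v ↔ (Γ.ends e).2 = v) then Γ.sign e else -Γ.sign e }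

/-- Switching at a set `S` of vertices (the composite of the switchings at the
vertices of `S`): the sign of an edge is negated iff exactly one of its
endpoints lies in `S`. -/
def switchSet (Γ : SGraph V E) (S : Set V) : SGraph V E :=
  { ends := Γ.ends,
    sign := fun e => if ((Γ.ends e).1 ∈ S ↔ (Γ.ends e).2 ∈ S) then Γ.sign e else -Γ.sign e }

/-- Isomorphism of signed graphs (as undirected signed multigraphs). -/
def Iso {V₁ E₁ V₂ E₂ : Type*} (Γ₁ : SGraph V₁ E₁) (Γ₂ : SGraph V₂ E₂) : Prop :=
  ∃ (φ : V₁ ≃ V₂) (ψ : E₁ ≃ E₂), ∀ e : E₁,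
    (Γ₂.ends (ψ e) = (φ (Γ₁.ends e).1, φ (Γ₁.ends e).2) ∨
      Γ₂.ends (ψ e) = (φ (Γ₁.ends e).2, φ (Γ₁.ends e).1)) ∧
    Γ₂.sign (ψ e) = Γ₁.sign e

/-- Switching equivalence: isomorphism after switching at a set of vertices. -/
def SwitchEquiv {V₁ E₁ V₂ E₂ : Type*} (Γ₁ : SGraph V₁ E₁) (Γ₂ : SGraph V₂ E₂) : Prop :=
  ∃ S : Set V₁, Iso (Γ₁.switchSet S) Γ₂

/-- Disjoint union of signed graphs. -/
def disjUnion {V₁ E₁ V₂ E₂ : Type*} (Γ₁ : SGraph V₁ E₁) (Γ₂ : SGraph V₂ E₂) :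
    SGraph (V₁ ⊕ V₂) (E₁ ⊕ E₂) where
  ends := fun e => match e with
    | .inl e => (Sum.inl (Γ₁.ends e).1, Sum.inl (Γ₁.ends e).2)
    | .inr e => (Sum.inr (Γ₂.ends e).1, Sum.inr (Γ₂.ends e).2)
  sign := fun e => match e with
    | .inl e => Γ₁.sign e
    | .inr e => Γ₂.sign e

/-- The difference operator `δ : G^V → G^E`,
`(δg)(e) = ω(v,e)·g(v) + ω(u,e)·g(u)` for `e = uv`. -/
def deltaHom (Γ : SGraph V E) (ω : E → Bool → ℤˣ) (G : Type*) [AddCommGroup G] :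
    (V → G) →+ (E → G) :=
  AddMonoidHom.mk'
    (fun g e => (ω e true : ℤ) • g ((Γ.ends e).1) + (ω e false : ℤ) • g ((Γ.ends e).2))
    (by
      intro a b
      funext e
      simp only [Pi.add_apply, smul_add]
      abel)

end SGraph

end SignedGraphs

-- AUXMARKER
noncomputable section Aux

namespace SGraph

variable {V E : Type*} {Γ : SGraph V E}

namespace Walk

lemma verts_ne_nil : ∀ {u v : V} (W : Γ.Walk u v), W.verts ≠ []
  | _, _, .nil x => by simp [verts]
  | _, _, .cons e d p => by simp [verts]

@[simp] lemma srcs_nil (v : V) : (Walk.nil (Γ := Γ) v).srcs = [] := rfl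

@[simp] lemma verts_nil (v : V) : (Walk.nil (Γ := Γ) v).verts = [v] := rfl

@[simp] lemma edges_nil (v : V) : (Walk.nil (Γ := Γ) v).edges = [] := rfl

@[simp] lemma sgn_nil (v : V) : (Walk.nil (Γ := Γ) v).sgn = 1 := rfl

@[simp] lemma verts_cons (e : E) (d : Bool) {w : V} (p : Γ.Walk (Γ.endpt e (!d)) w) :
    (Walk.cons e d p).verts = Γ.endpt e d :: p.verts := rfl

@[simp] lemma edges_cons (e : E) (d : Bool) {w : V} (p : Γ.Walk (Γ.endpt e (!d)) w) :
    (Walk.cons e d p).edges = e :: p.edges := rfl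

@[simp] lemma sgn_cons (e : E) (d : Bool) {w : V} (p : Γ.Walk (Γ.endpt e (!d)) w) :
    (Walk.cons e d p).sgn = Γ.sign e * p.sgn := rfl

@[simp] lemma srcs_cons (e : E) (d : Bool) {w : V} (p : Γ.Walk (Γ.endpt e (!d)) w) :
    (Walk.cons e d p).srcs = Γ.endpt e d :: p.srcs := by
  unfold srcs
  rw [verts_cons, List.dropLast_cons_of_ne_nil (verts_ne_nil p)]

@[simp] lemma nil_append {u v : V} (q : Γ.Walk u v) :
    (Walk.nil u).append q = q := rfl

@[simp] lemma cons_append (e : E) (d : Bool) {w u : V} (p : Γ.Walk (Γ.endpt e (!d)) w)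
    (q : Γ.Walk w u) : (Walk.cons e d p).append q = Walk.cons e d (p.append q) := rfl

lemma edges_append : ∀ {u v w : V} (p : Γ.Walk u v) (q : Γ.Walk v w),
    (p.append q).edges = p.edges ++ q.edges
  | _, _, _, .nil _, q => rfl
  | _, _, _, .cons e d p, q => by
      rw [cons_append, edges_cons, edges_cons, edges_append p q, List.cons_append]

lemma sgn_append : ∀ {u v w : V} (p : Γ.Walk u v) (q : Γ.Walk v w),
    (p.append q).sgn = p.sgn * q.sgn
  | _, _, _, .nil _, q => by rw [nil_append, sgn_nil, one_mul]
  | _, _, _, .cons e d p, q => by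
      rw [cons_append, sgn_cons, sgn_cons, sgn_append p q, mul_assoc]

lemma verts_append : ∀ {u v w : V} (p : Γ.Walk u v) (q : Γ.Walk v w),
    (p.append q).verts = p.srcs ++ q.verts
  | _, _, _, .nil _, q => by rw [nil_append, srcs_nil, List.nil_append]
  | _, _, _, .cons e d p, q => by
      rw [cons_append, verts_cons, srcs_cons, verts_append p q, List.cons_append]

lemma srcs_append {u v w : V} (p : Γ.Walk u v) (q : Γ.Walk v w) :
    (p.append q).srcs = p.srcs ++ q.srcs := by
  show (p.append q).verts.dropLast = _
  rw [verts_append, List.dropLast_append_of_ne_nil (verts_ne_nil q)]; rfl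

lemma eq_of_edges_nil : ∀ {u v : V} (W : Γ.Walk u v), W.edges = [] →
    u = v ∧ W.sgn = 1 ∧ W.srcs = []
  | _, _, .nil _, _ => ⟨rfl, rfl, rfl⟩
  | _, _, .cons e d p, h => by simp at h

lemma start_mem_srcs : ∀ {u v : V} (W : Γ.Walk u v), W.edges ≠ [] → u ∈ W.srcs
  | _, _, .nil _, h => absurd rfl h
  | _, _, .cons e d p, _ => by rw [srcs_cons]; exact List.mem_cons_self

lemma edges_ne_nil_of_mem_srcs {u v x : V} (W : Γ.Walk u v) (h : x ∈ W.srcs) :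
    W.edges ≠ [] := fun h0 => by
  rw [(eq_of_edges_nil W h0).2.2] at h; exact List.not_mem_nil h

end Walk

/-- A single-step walk along `e` in direction `d`. -/
def fstep (Γ : SGraph V E) (e : E) (d : Bool) : Γ.Walk (Γ.endpt e d) (Γ.endpt e (!d)) :=
  .cons e d (.nil _)

/-- A single-step walk along `e` against direction `d`. -/
def rstep (Γ : SGraph V E) (e : E) : (d : Bool) → Γ.Walk (Γ.endpt e (!d)) (Γ.endpt e d)
  | true => .cons e false (.nil _)
  | false => .cons e true (.nil _)

@[simp] lemma sgn_fstep (e : E) (d : Bool) : (Γ.fstep e d).sgn = Γ.sign e := by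
  simp [fstep]

@[simp] lemma sgn_rstep (e : E) (d : Bool) : (Γ.rstep e d).sgn = Γ.sign e := by
  cases d <;> simp [rstep]

@[simp] lemma edges_fstep (e : E) (d : Bool) : (Γ.fstep e d).edges = [e] := by
  simp [fstep]

@[simp] lemma edges_rstep (e : E) (d : Bool) : (Γ.rstep e d).edges = [e] := by
  cases d <;> simp [rstep]

namespace Walk

/-- Reversal of a walk. -/
def reverse : ∀ {u v : V}, Γ.Walk u v → Γ.Walk v u
  | _, _, .nil x => .nil x
  | _, _, .cons e d p => p.reverse.append (Γ.rstep e d)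

@[simp] lemma sgn_reverse : ∀ {u v : V} (W : Γ.Walk u v), W.reverse.sgn = W.sgn
  | _, _, .nil x => rfl
  | _, _, .cons e d p => by
      rw [reverse, sgn_append, sgn_reverse p, sgn_rstep, sgn_cons, mul_comm]

lemma split_at_vert {a b : V} (W : Γ.Walk a b) :
    ∀ u, u ∈ W.verts → ∃ (p : Γ.Walk a u) (q : Γ.Walk u b), W = p.append q ∧ u ∉ p.srcs := by
  induction W with
  | nil x =>
      intro u hu
      simp only [verts_nil, List.mem_singleton] at hu
      subst hu
      exact ⟨.nil u, .nil u, rfl, by simp⟩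
  | cons e d p ih =>
      intro u hu
      by_cases h : u = Γ.endpt e d
      · subst h
        exact ⟨.nil _, .cons e d p, rfl, by simp⟩
      · have hu' : u ∈ p.verts := by
          rw [verts_cons] at hu
          rcases List.mem_cons.mp hu with h1 | h1
          · exact absurd h1 h
          · exact h1
        obtain ⟨p₁, p₂, hp, hns⟩ := ih u hu'
        refine ⟨.cons e d p₁, p₂, by rw [hp, cons_append], ?_⟩
        rw [srcs_cons]
        simp only [List.mem_cons, not_or]
        exact ⟨h, hns⟩

lemma split_at_src {a b u : V} (W : Γ.Walk a b) (hu : u ∈ W.srcs) :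
    ∃ (p : Γ.Walk a u) (q : Γ.Walk u b), W = p.append q ∧ u ∉ p.srcs ∧ u ∈ q.srcs := by
  obtain ⟨p, q, rfl, h⟩ := split_at_vert W u ((List.dropLast_sublist _).mem hu)
  rw [srcs_append] at hu
  rcases List.mem_append.mp hu with h1 | h1
  · exact absurd h1 h
  · exact ⟨p, q, rfl, h, h1⟩

lemma split_closed_aux : ∀ {u b : V} (q : Γ.Walk u b), 2 ≤ q.srcs.count u →
    ∃ (r : Γ.Walk u u) (s : Γ.Walk u b), q = r.append s ∧ r.edges ≠ [] ∧ s.edges ≠ [] := by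
  intro u b q hq
  cases q with
  | nil =>
      simp at hq
  | cons e d p =>
      rw [srcs_cons, List.count_cons_self] at hq
      have hmem : Γ.endpt e d ∈ p.srcs := by
        have : 1 ≤ p.srcs.count (Γ.endpt e d) := by omega
        exact List.count_pos_iff.mp this
      obtain ⟨r, s, rfl, hnr, hns⟩ := split_at_src p hmem
      exact ⟨.cons e d r, s, by rw [cons_append], by simp,
        edges_ne_nil_of_mem_srcs s hns⟩

lemma split_closed {v : V} (W : Γ.Walk v v) (h : ¬ W.srcs.Nodup) :
    ∃ (u : V) (p : Γ.Walk v u) (r : Γ.Walk u u) (s : Γ.Walk u v),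
      W = p.append (r.append s) ∧ r.edges ≠ [] ∧ s.edges ≠ [] := by
  rw [List.nodup_iff_count_le_one] at h
  push_neg at h
  obtain ⟨u, hu⟩ := h
  have hu2 : 2 ≤ W.srcs.count u := hu
  have humem : u ∈ W.srcs := List.count_pos_iff.mp (by omega)
  obtain ⟨p, q, rfl, hup, huq⟩ := split_at_src W humem
  have hcount : 2 ≤ q.srcs.count u := by
    rw [srcs_append, List.count_append] at hu2
    rw [List.count_eq_zero_of_not_mem hup] at hu2
    omega
  obtain ⟨r, s, rfl, hr, hs⟩ := split_closed_aux q hcount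
  exact ⟨u, p, r, s, rfl, hr, hs⟩

lemma split_at_edge {a b : V} (W : Γ.Walk a b) :
    ∀ {e : E}, e ∈ W.edges → ∃ (d : Bool) (p : Γ.Walk a (Γ.endpt e d))
      (q : Γ.Walk (Γ.endpt e (!d)) b), W = p.append (.cons e d q) ∧ e ∉ p.edges := by
  induction W with
  | nil x => intro e he; simp at he
  | cons e' d' p ih =>
      intro e he
      by_cases h : e' = e
      · subst h
        exact ⟨d', .nil _, p, rfl, by simp⟩
      · have he' : e ∈ p.edges := by
          rw [edges_cons] at he
          rcases List.mem_cons.mp he with h1 | h1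
          · exact absurd h1.symm h
          · exact h1
        obtain ⟨d, p₁, q, hp, hne⟩ := ih he'
        refine ⟨d, .cons e' d' p₁, q, by rw [hp, cons_append], ?_⟩
        rw [edges_cons]
        simp only [List.mem_cons, not_or]
        exact ⟨fun hh => h hh.symm, hne⟩

lemma edges_nodup_of_srcs_nodup {v : V} (W : Γ.Walk v v) (h1 : W.srcs.Nodup)
    (h2 : W.sgn = -1) : W.edges.Nodup := by
  by_contra hnd
  rw [List.nodup_iff_count_le_one] at hnd
  push_neg at hnd
  obtain ⟨e, he⟩ := hnd
  obtain ⟨d, p, q, rfl, hep⟩ := split_at_edge W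
    (show e ∈ W.edges from List.count_pos_iff.mp (by omega))
  have heq : e ∈ q.edges := by
    rw [edges_append, edges_cons, List.count_append, List.count_cons_self,
      List.count_eq_zero_of_not_mem hep] at he
    exact (show e ∈ q.edges from List.count_pos_iff.mp (by omega))
  obtain ⟨d', r, s, rfl, her⟩ := split_at_edge q heq
  rw [srcs_append, srcs_cons, srcs_append, srcs_cons] at h1
  rw [sgn_append, sgn_cons, sgn_append, sgn_cons] at h2
  obtain ⟨hp1, h1, hdisj⟩ := List.nodup_append.mp h1
  obtain ⟨hhead, h1'⟩ := List.nodup_cons.mp h1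
  obtain ⟨hr1, h1'', hdisj2⟩ := List.nodup_append.mp h1'
  obtain ⟨hhead2, -⟩ := List.nodup_cons.mp h1''
  cases d <;> cases d'
  · -- d = false, d' = false
    exact hhead (List.mem_append_right _ List.mem_cons_self)
  · -- d = false, d' = true
    by_cases hre : r.edges = []
    · by_cases hse : s.edges = []
      · by_cases hpe : p.edges = []
        · obtain ⟨-, hrsgn, -⟩ := eq_of_edges_nil r hre
          obtain ⟨-, hssgn, -⟩ := eq_of_edges_nil s hse
          obtain ⟨-, hpsgn, -⟩ := eq_of_edges_nil p hpe
          rw [hrsgn, hssgn, hpsgn] at h2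
          simp only [one_mul, mul_one] at h2
          rw [Int.units_mul_self] at h2
          exact absurd h2 (by decide)
        · obtain ⟨hsv, -, -⟩ := eq_of_edges_nil s hse
          exact hdisj _ (start_mem_srcs p hpe) _ (List.mem_cons.mpr (Or.inl hsv.symm)) rfl
      · exact hhead (List.mem_append_right _
          (List.mem_cons.mpr (Or.inr (start_mem_srcs s hse))))
    · exact hdisj2 _ (start_mem_srcs r hre) _ List.mem_cons_self rfl
  · -- d = true, d' = false
    by_cases hre : r.edges = []
    · by_cases hse : s.edges = []
      · by_cases hpe : p.edges = []
        · obtain ⟨-, hrsgn, -⟩ := eq_of_edges_nil r hre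
          obtain ⟨-, hssgn, -⟩ := eq_of_edges_nil s hse
          obtain ⟨-, hpsgn, -⟩ := eq_of_edges_nil p hpe
          rw [hrsgn, hssgn, hpsgn] at h2
          simp only [one_mul, mul_one] at h2
          rw [Int.units_mul_self] at h2
          exact absurd h2 (by decide)
        · obtain ⟨hsv, -, -⟩ := eq_of_edges_nil s hse
          exact hdisj _ (start_mem_srcs p hpe) _ (List.mem_cons.mpr (Or.inl hsv.symm)) rfl
      · exact hhead (List.mem_append_right _
          (List.mem_cons.mpr (Or.inr (start_mem_srcs s hse))))
    · exact hdisj2 _ (start_mem_srcs r hre) _ List.mem_cons_self rfl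
  · -- d = true, d' = true
    exact hhead (List.mem_append_right _ List.mem_cons_self)

lemma exists_unbalanced_cycle : ∀ (k : ℕ) {v : V} (W : Γ.Walk v v),
    W.edges.length = k → W.sgn = -1 →
    ∃ (u : V) (_ : Γ.Walk v u) (C : Γ.Walk u u), Γ.IsCycle C ∧ C.sgn = -1 := by
  intro k
  induction k using Nat.strong_induction_on with
  | _ k ih =>
    intro v W hlen hsgn
    by_cases hnd : W.srcs.Nodup
    · refine ⟨v, .nil v, W, ⟨?_, hnd, edges_nodup_of_srcs_nodup W hnd hsgn⟩, hsgn⟩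
      intro h0
      rw [(eq_of_edges_nil W h0).2.1] at hsgn
      exact absurd hsgn (by decide)
    · obtain ⟨u, p, r, s, rfl, hre, hse⟩ := split_closed W hnd
      rw [sgn_append, sgn_append] at hsgn
      rw [edges_append, edges_append, List.length_append, List.length_append] at hlen
      have hrpos : 0 < r.edges.length := List.length_pos_iff.mpr hre
      have hspos : 0 < s.edges.length := List.length_pos_iff.mpr hse
      rcases Int.units_eq_one_or r.sgn with h | h
      · have houter : (p.append s).sgn = -1 := by
          rw [sgn_append]
          rw [h, one_mul] at hsgn
          exact hsgn
        have hlt : (p.append s).edges.length < k := by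
          rw [edges_append, List.length_append]; omega
        exact ih _ hlt (p.append s) rfl houter
      · have hlt : r.edges.length < k := by omega
        obtain ⟨u', w, C, hC⟩ := ih _ hlt r rfl h
        exact ⟨u', p.append w, C, hC⟩

end Walk

lemma adj_endpt (e : E) (d : Bool) : Γ.Adj (Γ.endpt e d) (Γ.endpt e (!d)) := by
  cases d
  · exact ⟨e, Or.inr rfl⟩
  · exact ⟨e, Or.inl rfl⟩

lemma comp_eq_of_walk : ∀ {u v : V}, Γ.Walk u v → Γ.comp u = Γ.comp v
  | _, _, .nil x => rfl
  | _, _, .cons e d p => (Quot.sound (adj_endpt e d)).trans (comp_eq_of_walk p)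

lemma walk_of_adj {a b : V} (h : Γ.Adj a b) : Nonempty (Γ.Walk a b) := by
  obtain ⟨e, h | h⟩ := h
  · have w := Γ.fstep e true
    have h1 : Γ.endpt e true = a := by simp [SGraph.endpt, h]
    have h2 : Γ.endpt e (!true) = b := by simp [SGraph.endpt, h]
    exact ⟨h1 ▸ h2 ▸ w⟩
  · have w := Γ.rstep e true
    have h1 : Γ.endpt e (!true) = a := by simp [SGraph.endpt, h]
    have h2 : Γ.endpt e true = b := by simp [SGraph.endpt, h]
    exact ⟨h1 ▸ h2 ▸ w⟩

lemma reach_iff_comp_eq {u v : V} : Nonempty (Γ.Walk u v) ↔ Γ.comp u = Γ.comp v := by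
  constructor
  · rintro ⟨W⟩; exact comp_eq_of_walk W
  · intro h
    have key : ∀ a b, Γ.Adj a b → (Nonempty (Γ.Walk u a)) = (Nonempty (Γ.Walk u b)) := by
      intro a b hab
      obtain ⟨w⟩ := walk_of_adj hab
      apply propext
      constructor
      · rintro ⟨W⟩; exact ⟨W.append w⟩
      · rintro ⟨W⟩; exact ⟨W.append w.reverse⟩
    have h1 : Nonempty (Γ.Walk u u) = Nonempty (Γ.Walk u v) :=
      congrArg (Quot.lift (fun w => Nonempty (Γ.Walk u w)) (fun a b hab => key a b hab)) h
    exact h1 ▸ ⟨.nil u⟩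

section Harmonic

variable {G : Type*} [AddCommGroup G]

/-- A harmonic (edge-compatible) coloring: `f(u) = σ(e)·f(v)` along every edge. -/
def Harm (Γ : SGraph V E) (f : V → G) : Prop :=
  ∀ e, f (Γ.ends e).1 = ((Γ.sign e : ℤˣ) : ℤ) • f (Γ.ends e).2

lemma smul_unit_cancel (σ : ℤˣ) (x : G) : ((σ : ℤˣ) : ℤ) • ((σ : ℤˣ) : ℤ) • x = x := by
  rw [smul_smul, ← Units.val_mul, Int.units_mul_self, Units.val_one, one_smul]

lemma Harm.step {f : V → G} (hf : Γ.Harm f) (e : E) (d : Bool) :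
    f (Γ.endpt e d) = ((Γ.sign e : ℤˣ) : ℤ) • f (Γ.endpt e (!d)) := by
  cases d
  · have h := congrArg (fun x => ((Γ.sign e : ℤˣ) : ℤ) • x) (hf e)
    rw [smul_unit_cancel] at h
    exact h.symm
  · exact hf e

lemma Harm.walk {f : V → G} (hf : Γ.Harm f) : ∀ {u v : V} (W : Γ.Walk u v),
    f u = ((W.sgn : ℤˣ) : ℤ) • f v
  | _, _, .nil x => by rw [Walk.sgn_nil, Units.val_one, one_smul]
  | _, _, .cons e d p => by
      rw [hf.step e d, hf.walk p, Walk.sgn_cons, smul_smul, ← Units.val_mul]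

end Harmonic

/-- A choice of representative vertex in each component. -/
def rep (Γ : SGraph V E) (c : Γ.Components) : V := (Quot.exists_rep c).choose

lemma comp_rep (Γ : SGraph V E) (c : Γ.Components) : Γ.comp (Γ.rep c) = c :=
  (Quot.exists_rep c).choose_spec

/-- A chosen walk from the representative of the component of `v` to `v`. -/
def repWalk (Γ : SGraph V E) (v : V) : Γ.Walk (Γ.rep (Γ.comp v)) v :=
  Classical.choice (reach_iff_comp_eq.mpr (Γ.comp_rep (Γ.comp v)))

/-- The sign of the chosen walk from the representative to `v`. -/
def theta (Γ : SGraph V E) (v : V) : ℤˣ := (Γ.repWalk v).sgn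

lemma closed_walk_sgn {a : V} (hbal : Γ.IsBalancedComponent (Γ.comp a)) (W : Γ.Walk a a) :
    W.sgn = 1 := by
  rcases Int.units_eq_one_or W.sgn with h | h
  · exact h
  · exfalso
    obtain ⟨u, wu, C, hC, hCs⟩ := Walk.exists_unbalanced_cycle _ W rfl h
    have hcomp : Γ.comp u = Γ.comp a := (comp_eq_of_walk wu).symm
    have h1 := hbal u hcomp C hC
    rw [h1] at hCs
    exact absurd hCs (by decide)

lemma sgn_unique {a v : V} (hbal : Γ.IsBalancedComponent (Γ.comp v))
    (W₁ W₂ : Γ.Walk a v) : W₁.sgn = W₂.sgn := by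
  have hcomp : Γ.comp a = Γ.comp v := comp_eq_of_walk W₁
  have h : (W₁.append W₂.reverse).sgn = 1 := closed_walk_sgn (hcomp.symm ▸ hbal) _
  rw [Walk.sgn_append, Walk.sgn_reverse] at h
  calc W₁.sgn = W₁.sgn * (W₂.sgn * W₂.sgn) := by rw [Int.units_mul_self, mul_one]
    _ = (W₁.sgn * W₂.sgn) * W₂.sgn := (mul_assoc _ _ _).symm
    _ = W₂.sgn := by rw [h, one_mul]

lemma theta_spec {v : V} (hbal : Γ.IsBalancedComponent (Γ.comp v))
    (W : Γ.Walk (Γ.rep (Γ.comp v)) v) : W.sgn = Γ.theta v :=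
  sgn_unique hbal W (Γ.repWalk v)

lemma theta_rep {c : Γ.Components} (hbal : Γ.IsBalancedComponent c) :
    Γ.theta (Γ.rep c) = 1 := by
  have hb : Γ.IsBalancedComponent (Γ.comp (Γ.rep c)) := by rw [Γ.comp_rep]; exact hbal
  have h : Γ.rep (Γ.comp (Γ.rep c)) = Γ.rep c := congrArg Γ.rep (Γ.comp_rep c)
  have key : ∀ W : Γ.Walk (Γ.rep (Γ.comp (Γ.rep c))) (Γ.rep c), W.sgn = 1 := by
    rw [h]
    intro W
    exact closed_walk_sgn hb W
  exact key (Γ.repWalk (Γ.rep c))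

lemma theta_edge {e : E} (hbal : Γ.IsBalancedComponent (Γ.comp (Γ.ends e).1)) :
    Γ.theta (Γ.ends e).1 = Γ.sign e * Γ.theta (Γ.ends e).2 := by
  have hcomp : Γ.comp (Γ.ends e).1 = Γ.comp (Γ.ends e).2 := comp_eq_of_walk (Γ.fstep e true)
  have hr : Γ.rep (Γ.comp (Γ.ends e).1) = Γ.rep (Γ.comp (Γ.ends e).2) := congrArg Γ.rep hcomp
  have key : ∀ W : Γ.Walk (Γ.rep (Γ.comp (Γ.ends e).2)) (Γ.ends e).2,
      (W.append (Γ.rstep e true)).sgn = Γ.theta (Γ.ends e).1 := by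
    rw [← hr]
    intro W
    exact theta_spec hbal (W.append (Γ.rstep e true))
  have h2 := key (Γ.repWalk (Γ.ends e).2)
  rw [Walk.sgn_append (Γ.repWalk (Γ.ends e).2) (Γ.rstep e true)] at h2
  erw [sgn_rstep] at h2
  rw [mul_comm] at h2
  exact h2.symm

section HarmG

variable {G : Type*} [AddCommGroup G]

lemma unbal_zero (htf : ∀ x : G, x + x = 0 → x = 0) {f : V → G} (hf : Γ.Harm f)
    {v : V} (hbal : ¬ Γ.IsBalancedComponent (Γ.comp v)) : f v = 0 := by
  unfold IsBalancedComponent at hbal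
  push_neg at hbal
  obtain ⟨w, hw, W, hC, hs⟩ := hbal
  have hsgn : W.sgn = -1 := (Int.units_eq_one_or W.sgn).resolve_left hs
  have h1 : f w = -(f w) := by
    have h0 := hf.walk W
    rw [hsgn] at h0
    simpa using h0
  have h2 : f w = 0 := htf _ (by nth_rewrite 1 [h1]; exact neg_add_cancel _)
  obtain ⟨W'⟩ : Nonempty (Γ.Walk v w) := reach_iff_comp_eq.mpr hw.symm
  rw [hf.walk W', h2, smul_zero]

lemma bal_determine {f : V → G} (hf : Γ.Harm f) {v : V}
    (hbal : Γ.IsBalancedComponent (Γ.comp v)) :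
    f v = ((Γ.theta v : ℤˣ) : ℤ) • f (Γ.rep (Γ.comp v)) := by
  have h0 : f (Γ.rep (Γ.comp v)) = ((Γ.theta v : ℤˣ) : ℤ) • f v := hf.walk (Γ.repWalk v)
  have h2 := congrArg (fun x => ((Γ.theta v : ℤˣ) : ℤ) • x) h0
  rw [smul_unit_cancel] at h2
  exact h2.symm

/-- Gluing a choice of values on balanced components into a harmonic coloring. -/
def glue (Γ : SGraph V E) {G : Type*} [AddCommGroup G]
    (x : {c : Γ.Components // Γ.IsBalancedComponent c} → G) : V → G :=
  fun v => if h : Γ.IsBalancedComponent (Γ.comp v) then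
    ((Γ.theta v : ℤˣ) : ℤ) • x ⟨Γ.comp v, h⟩ else 0

lemma glue_harm (x : {c : Γ.Components // Γ.IsBalancedComponent c} → G) :
    Γ.Harm (Γ.glue x) := by
  intro e
  have hcomp : Γ.comp (Γ.ends e).1 = Γ.comp (Γ.ends e).2 := comp_eq_of_walk (Γ.fstep e true)
  by_cases h : Γ.IsBalancedComponent (Γ.comp (Γ.ends e).1)
  · have h' : Γ.IsBalancedComponent (Γ.comp (Γ.ends e).2) := hcomp ▸ h
    simp only [glue, dif_pos h, dif_pos h']
    have hx : x ⟨Γ.comp (Γ.ends e).2, h'⟩ = x ⟨Γ.comp (Γ.ends e).1, h⟩ :=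
      congrArg x (Subtype.ext hcomp.symm)
    have hθ := congrArg (Units.val) (theta_edge h)
    rw [Units.val_mul] at hθ
    rw [hx, smul_smul, hθ]
  · have h' : ¬ Γ.IsBalancedComponent (Γ.comp (Γ.ends e).2) :=
      fun hb => h (hcomp.symm ▸ hb)
    simp only [glue, dif_neg h, dif_neg h', smul_zero]

lemma glue_rep (x : {c : Γ.Components // Γ.IsBalancedComponent c} → G)
    (c : {c : Γ.Components // Γ.IsBalancedComponent c}) :
    Γ.glue x (Γ.rep c.1) = x c := by
  have h : Γ.IsBalancedComponent (Γ.comp (Γ.rep c.1)) := by rw [Γ.comp_rep]; exact c.2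
  simp only [glue, dif_pos h]
  have hx : x ⟨Γ.comp (Γ.rep c.1), h⟩ = x c := congrArg x (Subtype.ext (Γ.comp_rep c.1))
  rw [theta_rep c.2, Units.val_one, one_smul, hx]

end HarmG

section Counting

instance instFiniteComponents (Γ : SGraph V E) [Finite V] : Finite Γ.Components :=
  Finite.of_surjective Γ.comp (fun c => Quot.exists_rep c)

lemma htf_int : ∀ x : ℤ, x + x = 0 → x = 0 := fun x h => by omega

/-- The fundamental bijection for bounded harmonic colorings. -/
def equivA (Γ : SGraph V E) (n : ℕ) :
    {f : V → ℤ // (∀ v, |f v| ≤ (n : ℤ)) ∧ Γ.Harm f} ≃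
      ({c : Γ.Components // Γ.IsBalancedComponent c} → {x : ℤ // |x| ≤ (n : ℤ)}) where
  toFun f c := ⟨f.1 (Γ.rep c.1), f.2.1 _⟩
  invFun x := ⟨Γ.glue (fun c => (x c : ℤ)), by
      intro v
      by_cases h : Γ.IsBalancedComponent (Γ.comp v)
      · simp only [glue, dif_pos h]
        rcases Int.units_eq_one_or (Γ.theta v) with hθ | hθ <;>
          · rw [hθ]
            simpa using (x _).2
      · simp only [glue, dif_neg h]
        simpa using Int.ofNat_nonneg n,
    glue_harm _⟩
  left_inv f := Subtype.ext (funext fun v => by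
    by_cases h : Γ.IsBalancedComponent (Γ.comp v)
    · simp only [glue, dif_pos h]
      exact (bal_determine f.2.2 h).symm
    · simp only [glue, dif_neg h]
      exact (unbal_zero htf_int f.2.2 h).symm)
  right_inv x := funext fun c => Subtype.ext
    (show Γ.glue (fun c => ((x c : ℤ))) (Γ.rep c.1) = (x c : ℤ) from glue_rep _ c)

lemma card_Icc_abs (n : ℕ) : Nat.card {x : ℤ // |x| ≤ (n : ℤ)} = 2 * n + 1 := by
  rw [Nat.card_congr (Equiv.subtypeEquivRight (q := fun x => x ∈ Finset.Icc (-(n : ℤ)) n)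
    (fun x => by simp [Finset.mem_Icc, abs_le]))]
  rw [Nat.card_eq_finsetCard, Int.card_Icc]
  omega

lemma card_bounded_harm (Γ : SGraph V E) [Finite V] (n : ℕ) :
    Nat.card {f : V → ℤ // (∀ v, |f v| ≤ (n : ℤ)) ∧ Γ.Harm f} = (2 * n + 1) ^ Γ.kb := by
  rw [Nat.card_congr (equivA Γ n), Nat.card_fun, card_Icc_abs]
  rfl

/-- The bijection for nonzero bounded harmonic colorings, when all components are
balanced. -/
def equivB (Γ : SGraph V E) (n : ℕ) (hall : ∀ c : Γ.Components, Γ.IsBalancedComponent c) :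
    {f : V → ℤ // (∀ v, |f v| ≤ (n : ℤ)) ∧ Γ.Harm f ∧ ∀ v, f v ≠ 0} ≃
      ({c : Γ.Components // Γ.IsBalancedComponent c} → {x : ℤ // |x| ≤ (n : ℤ) ∧ x ≠ 0}) where
  toFun f c := ⟨f.1 (Γ.rep c.1), f.2.1 _, f.2.2.2 _⟩
  invFun x := ⟨Γ.glue (fun c => (x c : ℤ)), by
      intro v
      simp only [glue, dif_pos (hall (Γ.comp v))]
      rcases Int.units_eq_one_or (Γ.theta v) with hθ | hθ <;>
        · rw [hθ]
          simpa using (x _).2.1,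
    glue_harm _, by
      intro v
      simp only [glue, dif_pos (hall (Γ.comp v))]
      rcases Int.units_eq_one_or (Γ.theta v) with hθ | hθ <;>
        · rw [hθ]
          simpa using (x _).2.2⟩
  left_inv f := Subtype.ext (funext fun v => by
    simp only [glue, dif_pos (hall (Γ.comp v))]
    exact (bal_determine f.2.2.1 (hall _)).symm)
  right_inv x := funext fun c => Subtype.ext
    (show Γ.glue (fun c => ((x c : ℤ))) (Γ.rep c.1) = (x c : ℤ) from glue_rep _ c)

lemma card_Icc_abs_ne (n : ℕ) : Nat.card {x : ℤ // |x| ≤ (n : ℤ) ∧ x ≠ 0} = 2 * n := by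
  rw [Nat.card_congr (Equiv.subtypeEquivRight
    (q := fun x => x ∈ (Finset.Icc (-(n : ℤ)) n).erase 0)
    (fun x => by simp only [Finset.mem_erase, Finset.mem_Icc, ← abs_le]; tauto))]
  rw [Nat.card_eq_finsetCard, Finset.card_erase_of_mem (by rw [Finset.mem_Icc]; omega),
    Int.card_Icc]
  omega

lemma card_bounded_harm_nonzero_pos (Γ : SGraph V E) [Finite V] (n : ℕ) (hku : Γ.ku = 0) :
    Nat.card {f : V → ℤ // (∀ v, |f v| ≤ (n : ℤ)) ∧ Γ.Harm f ∧ ∀ v, f v ≠ 0} =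
      (2 * n) ^ Γ.kb := by
  have he : IsEmpty {c : Γ.Components // ¬ Γ.IsBalancedComponent c} := by
    rcases Nat.card_eq_zero.mp hku with h | h
    · exact h
    · exact absurd h (not_infinite_iff_finite.mpr inferInstance)
  have hall : ∀ c : Γ.Components, Γ.IsBalancedComponent c := fun c => by
    by_contra hc; exact he.false ⟨c, hc⟩
  rw [Nat.card_congr (equivB Γ n hall), Nat.card_fun, card_Icc_abs_ne]
  rfl

lemma card_bounded_harm_nonzero_zero (Γ : SGraph V E) [Finite V] (n : ℕ) (hku : Γ.ku ≠ 0) :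
    Nat.card {f : V → ℤ // (∀ v, |f v| ≤ (n : ℤ)) ∧ Γ.Harm f ∧ ∀ v, f v ≠ 0} = 0 := by
  rw [Nat.card_eq_zero]
  left
  refine ⟨fun f => ?_⟩
  obtain ⟨f, hb, hh, hnz⟩ := f
  obtain ⟨⟨c, hc⟩, -⟩ := Nat.card_ne_zero.mp hku
  exact hnz _ (unbal_zero htf_int hh (by rw [Γ.comp_rep]; exact hc))

end Counting

lemma htf_rat : ∀ x : ℚ, x + x = 0 → x = 0 := fun x h => by linarith

lemma card_le_card_add_kb (Γ : SGraph V E) [Finite V] [Finite E] :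
    Nat.card V ≤ Nat.card E + Γ.kb := by
  obtain ⟨iV⟩ := nonempty_fintype V
  obtain ⟨iE⟩ := nonempty_fintype E
  letI := iV
  letI := iE
  let Φ : (V → ℚ) →ₗ[ℚ] (E → ℚ) :=
    { toFun := fun f e => f (Γ.ends e).1 - (((Γ.sign e : ℤˣ) : ℤ) : ℚ) * f (Γ.ends e).2
      map_add' := fun f g => by funext e; simp; ring
      map_smul' := fun c f => by funext e; simp; ring }
  have hker : ∀ f : V → ℚ, f ∈ LinearMap.ker Φ ↔ Γ.Harm f := by
    intro f
    rw [LinearMap.mem_ker]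
    constructor
    · intro h e
      have h2 : f (Γ.ends e).1 - (((Γ.sign e : ℤˣ) : ℤ) : ℚ) * f (Γ.ends e).2 = 0 :=
        congrFun h e
      rw [zsmul_eq_mul]
      linarith
    · intro h
      funext e
      show f (Γ.ends e).1 - (((Γ.sign e : ℤˣ) : ℤ) : ℚ) * f (Γ.ends e).2 = 0
      rw [sub_eq_zero, ← zsmul_eq_mul]
      exact h e
  have hres : Function.Bijective (fun (f : LinearMap.ker Φ)
      (c : {c : Γ.Components // Γ.IsBalancedComponent c}) => (f : V → ℚ) (Γ.rep c.1)) := by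
    constructor
    · intro f g hfg
      apply Subtype.ext
      funext v
      have hf : Γ.Harm (f : V → ℚ) := (hker _).mp f.2
      have hg : Γ.Harm (g : V → ℚ) := (hker _).mp g.2
      by_cases h : Γ.IsBalancedComponent (Γ.comp v)
      · have hc := congrFun hfg ⟨Γ.comp v, h⟩
        simp only at hc
        rw [bal_determine hf h, bal_determine hg h, hc]
      · rw [unbal_zero htf_rat hf h, unbal_zero htf_rat hg h]
    · intro x
      refine ⟨⟨Γ.glue x, (hker _).mpr (glue_harm x)⟩, ?_⟩
      funext c
      exact glue_rep x c
  haveI : Fintype {c : Γ.Components // Γ.IsBalancedComponent c} := Fintype.ofFinite _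
  have h1 : Module.finrank ℚ (LinearMap.ker Φ) = Γ.kb := by
    have e := LinearEquiv.ofBijective
      ({ toFun := fun f c => (f : V → ℚ) (Γ.rep c.1),
         map_add' := fun f g => rfl, map_smul' := fun c f => rfl } :
         LinearMap.ker Φ →ₗ[ℚ] ({c : Γ.Components // Γ.IsBalancedComponent c} → ℚ)) hres
    rw [e.finrank_eq, Module.finrank_pi, ← Nat.card_eq_fintype_card]
    rfl
  have h2 := LinearMap.finrank_range_add_finrank_ker Φ
  rw [Module.finrank_pi] at h2
  have h3 : Module.finrank ℚ (LinearMap.range Φ) ≤ Fintype.card E := by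
    have h4 := Submodule.finrank_le (LinearMap.range Φ)
    rwa [Module.finrank_pi] at h4
  rw [Nat.card_eq_fintype_card, Nat.card_eq_fintype_card]
  omega

lemma kAll_le_card (Γ : SGraph V E) [Finite V] : Γ.kAll ≤ Nat.card V :=
  Nat.card_le_card_of_surjective Γ.comp (fun c => Quot.exists_rep c)

lemma kb_add_ku (Γ : SGraph V E) [Finite V] : Γ.kb + Γ.ku = Γ.kAll := by
  obtain ⟨iC⟩ := nonempty_fintype Γ.Components
  letI := iC
  unfold kb ku kAll
  rw [Nat.card_eq_fintype_card, Nat.card_eq_fintype_card, Nat.card_eq_fintype_card,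
    Fintype.card_subtype_compl]
  have := Fintype.card_subtype_le (fun c : Γ.Components => Γ.IsBalancedComponent c)
  omega

lemma kAll_le_kAll_restrict (Γ : SGraph V E) [Finite V] (A : Set E) :
    Γ.kAll ≤ (Γ.restrict A).kAll := by
  have hlift : ∀ a b, (Γ.restrict A).Adj a b → Γ.comp a = Γ.comp b := by
    rintro a b ⟨e, he | he⟩
    · exact Quot.sound ⟨e.1, Or.inl he⟩
    · exact Quot.sound ⟨e.1, Or.inr he⟩
  apply Nat.card_le_card_of_surjective (Quot.lift (fun v => Γ.comp v) hlift)
  intro c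
  obtain ⟨v, hv⟩ := Quot.exists_rep c
  exact ⟨(Γ.restrict A).comp v, hv⟩

lemma harmOn_iff (Γ : SGraph V E) (A : Finset E) (f : V → ℤ) :
    (∀ e ∈ A, f (Γ.ends e).1 = (Γ.sign e : ℤ) * f (Γ.ends e).2) ↔
      (Γ.restrict (A : Set E)).Harm f := by
  constructor
  · intro h e
    rw [smul_eq_mul]
    exact h e.1 e.2
  · intro h e he
    have h2 := h ⟨e, he⟩
    rwa [smul_eq_mul] at h2

lemma incl_excl (Γ : SGraph V E) [Fintype V] [Fintype E] (n : ℕ) (Q : (V → ℤ) → Prop) :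
    ((Nat.card {f : V → ℤ // (∀ v, |f v| ≤ (n : ℤ)) ∧ Q f ∧
        ∀ e : E, f (Γ.ends e).1 ≠ (Γ.sign e : ℤ) * f (Γ.ends e).2}) : ℚ) =
      ∑ A : Finset E, (-1 : ℚ) ^ A.card *
        ((Nat.card {f : V → ℤ // (∀ v, |f v| ≤ (n : ℤ)) ∧ Q f ∧
          ∀ e ∈ A, f (Γ.ends e).1 = (Γ.sign e : ℤ) * f (Γ.ends e).2}) : ℚ) := by
  classical
  haveI : Finite {f : V → ℤ // (∀ v, |f v| ≤ (n : ℤ)) ∧ Q f} := by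
    apply Finite.of_injective (fun f => (fun v =>
      (⟨f.1 v, Finset.mem_Icc.mpr (abs_le.mp (f.2.1 v))⟩ :
        ↥(Finset.Icc (-(n : ℤ)) (n : ℤ)))))
    intro f g h
    apply Subtype.ext
    funext v
    exact congrArg Subtype.val (congrFun h v)
  haveI : Fintype {f : V → ℤ // (∀ v, |f v| ≤ (n : ℤ)) ∧ Q f} := Fintype.ofFinite _
  let Bad : {f : V → ℤ // (∀ v, |f v| ≤ (n : ℤ)) ∧ Q f} → Finset E := fun g =>
    Finset.univ.filter (fun e => g.1 (Γ.ends e).1 = (Γ.sign e : ℤ) * g.1 (Γ.ends e).2)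
  have hcard1 : ∀ A : Finset E,
      Nat.card {f : V → ℤ // (∀ v, |f v| ≤ (n : ℤ)) ∧ Q f ∧
          ∀ e ∈ A, f (Γ.ends e).1 = (Γ.sign e : ℤ) * f (Γ.ends e).2} =
        (Finset.univ.filter (fun g => A ⊆ Bad g)).card := by
    intro A
    rw [← Fintype.card_subtype, ← Nat.card_eq_fintype_card]
    apply Nat.card_congr
    exact { toFun := fun f => ⟨⟨f.1, f.2.1, f.2.2.1⟩, fun e he =>
              Finset.mem_filter.mpr ⟨Finset.mem_univ _, f.2.2.2 e he⟩⟩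
            invFun := fun g => ⟨g.1.1, g.1.2.1, g.1.2.2, fun e he =>
              (Finset.mem_filter.mp (g.2 he)).2⟩
            left_inv := fun f => rfl
            right_inv := fun g => rfl }
  have hcard2 : Nat.card {f : V → ℤ // (∀ v, |f v| ≤ (n : ℤ)) ∧ Q f ∧
        ∀ e : E, f (Γ.ends e).1 ≠ (Γ.sign e : ℤ) * f (Γ.ends e).2} =
      (Finset.univ.filter (fun g => Bad g = ∅)).card := by
    rw [← Fintype.card_subtype, ← Nat.card_eq_fintype_card]
    apply Nat.card_congr
    exact { toFun := fun f => ⟨⟨f.1, f.2.1, f.2.2.1⟩, Finset.filter_eq_empty_iff.mpr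
              (fun {e} _ => f.2.2.2 e)⟩
            invFun := fun g => ⟨g.1.1, g.1.2.1, g.1.2.2, fun e =>
              Finset.filter_eq_empty_iff.mp g.2 (Finset.mem_univ e)⟩
            left_inv := fun f => rfl
            right_inv := fun g => rfl }
  rw [hcard2]
  have hpow : ∀ s : Finset E, Finset.univ.filter (fun A : Finset E => A ⊆ s) = s.powerset := by
    intro s; ext A; simp
  have hQs : ∀ s : Finset E, (∑ A ∈ s.powerset, (-1 : ℚ) ^ A.card) =
      if s = ∅ then 1 else 0 := by
    intro s
    have h := Finset.sum_powerset_neg_one_pow_card (x := s)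
    calc (∑ A ∈ s.powerset, (-1 : ℚ) ^ A.card)
        = ((∑ A ∈ s.powerset, (-1 : ℤ) ^ A.card : ℤ) : ℚ) := by push_cast; rfl
      _ = ((if s = ∅ then (1 : ℤ) else 0 : ℤ) : ℚ) := by rw [h]
      _ = if s = ∅ then 1 else 0 := by split <;> simp
  calc ((Finset.univ.filter (fun g => Bad g = ∅)).card : ℚ)
      = ∑ g, if Bad g = ∅ then (1 : ℚ) else 0 := by rw [Finset.sum_boole]
    _ = ∑ g, (∑ A ∈ (Bad g).powerset, (-1 : ℚ) ^ A.card) := by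
        apply Finset.sum_congr rfl; intro g _; rw [hQs]
    _ = ∑ g, (∑ A ∈ Finset.univ.filter (fun A : Finset E => A ⊆ Bad g),
          (-1 : ℚ) ^ A.card) := by
        apply Finset.sum_congr rfl; intro g _; rw [hpow]
    _ = ∑ g, ∑ A : Finset E, if A ⊆ Bad g then (-1 : ℚ) ^ A.card else 0 := by
        apply Finset.sum_congr rfl; intro g _; rw [Finset.sum_filter]
    _ = ∑ A : Finset E, ∑ g, if A ⊆ Bad g then (-1 : ℚ) ^ A.card else 0 :=
        Finset.sum_comm
    _ = ∑ A : Finset E, (-1 : ℚ) ^ A.card * ∑ g, (if A ⊆ Bad g then (1 : ℚ) else 0) := by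
        apply Finset.sum_congr rfl; intro A _
        rw [Finset.mul_sum]
        apply Finset.sum_congr rfl; intro g _
        rw [mul_ite, mul_one, mul_zero]
    _ = ∑ A : Finset E, (-1 : ℚ) ^ A.card *
          ((Finset.univ.filter (fun g => A ⊆ Bad g)).card : ℚ) := by
        apply Finset.sum_congr rfl; intro A _; rw [Finset.sum_boole]
    _ = _ := by
        apply Finset.sum_congr rfl; intro A _; rw [hcard1]

end SGraph

lemma neg_one_pow_par (m k : ℕ) (h : m % 2 = k % 2) : (-1 : ℚ) ^ m = (-1 : ℚ) ^ k := by
  conv_lhs => rw [← Nat.div_add_mod m 2]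
  conv_rhs => rw [← Nat.div_add_mod k 2]
  rw [pow_add, pow_add, pow_mul, pow_mul]
  norm_num [h]

lemma alg1 (q : ℚ) (hq : q ≠ 0) (nV K k kb ku a : ℕ) (h1 : K ≤ nV) (h2 : K ≤ k)
    (h3 : nV ≤ a + kb) (h4 : k = kb + ku) :
    (-1 : ℚ) ^ (nV - K) * q ^ K *
        ((-q) ^ (k - K) * (-1 : ℚ) ^ (a + kb - nV) * (-q⁻¹) ^ ku) = (-1 : ℚ) ^ a * q ^ kb := by
  have hsign : (-1 : ℚ) ^ (nV - K) * ((-1 : ℚ) ^ (k - K) *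
      ((-1 : ℚ) ^ (a + kb - nV) * (-1 : ℚ) ^ ku)) = (-1 : ℚ) ^ a := by
    rw [← pow_add, ← pow_add, ← pow_add]
    apply neg_one_pow_par
    omega
  have hpow : q ^ K * (q ^ (k - K) * (q ^ ku)⁻¹) = q ^ kb := by
    rw [← mul_assoc, ← pow_add]
    have h5 : K + (k - K) = kb + ku := by omega
    rw [h5, pow_add, mul_assoc, mul_inv_cancel₀ (pow_ne_zero _ hq), mul_one]
  rw [neg_pow q, neg_pow q⁻¹, inv_pow, ← hsign, ← hpow]
  ring

lemma alg2 (q : ℚ) (hq : q ≠ 0) (nV K k kb a : ℕ) (h1 : K ≤ nV) (h2 : K ≤ k)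
    (h3 : nV ≤ a + kb) (h4 : k = kb) :
    (-1 : ℚ) ^ (nV - K) * q ^ K *
        ((-q) ^ (k - K) * (-1 : ℚ) ^ (a + kb - nV)) = (-1 : ℚ) ^ a * q ^ kb := by
  have hsign : (-1 : ℚ) ^ (nV - K) * ((-1 : ℚ) ^ (k - K) *
      (-1 : ℚ) ^ (a + kb - nV)) = (-1 : ℚ) ^ a := by
    rw [← pow_add, ← pow_add]
    apply neg_one_pow_par
    omega
  have hpow : q ^ K * q ^ (k - K) = q ^ kb := by
    rw [← pow_add]
    congr 1
    omega
  rw [neg_pow q, ← hsign, ← hpow]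
  ring

end Aux

section Statement

open SGraph

/-- Corollary 6.3: the numbers of proper `n`-colorings and of proper non-zero
`n`-colorings of a signed graph as evaluations of the signed Tutte polynomial. -/
theorem card_proper_n_colorings (V E : Type) [Finite V] [Finite E]
    (Γ : SGraph V E) (n : ℕ) (hn : 1 ≤ n) :
    (Nat.card {f : V → ℤ // Γ.IsProperNColoring n f} : ℚ) =
      (-1 : ℚ) ^ (Nat.card V - Γ.kAll) * (2 * (n : ℚ) + 1) ^ Γ.kAll *
        Γ.signedTutte (-(2 * (n : ℚ))) 0 ((2 * (n : ℚ)) / (2 * (n : ℚ) + 1)) ∧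
    (Nat.card {f : V → ℤ // Γ.IsProperNColoring n f ∧ ∀ v : V, f v ≠ 0} : ℚ) =
      (-1 : ℚ) ^ (Nat.card V - Γ.kAll) * (2 * (n : ℚ)) ^ Γ.kAll *
        Γ.signedTutte (1 - 2 * (n : ℚ)) 0 1 := by
  obtain ⟨iV⟩ := nonempty_fintype V
  obtain ⟨iE⟩ := nonempty_fintype E
  letI := iV
  letI := iE
  have hq0 : (2 * (n : ℚ) + 1) ≠ 0 := by positivity
  have hn1 : (1 : ℚ) ≤ (n : ℚ) := by exact_mod_cast hn
  have hp0 : (2 * (n : ℚ)) ≠ 0 := ne_of_gt (by linarith)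
  have hTutte : ∀ (x y z : ℚ), Γ.signedTutte x y z = ∑ A : Finset E,
      (x - 1) ^ ((Γ.restrict (A : Set E)).kAll - Γ.kAll) *
        (y - 1) ^ ((A.card + (Γ.restrict (A : Set E)).kb) - Nat.card V) *
          (z - 1) ^ (Γ.restrict (A : Set E)).ku := by
    intro x y z
    unfold SGraph.signedTutte
    exact finsum_eq_sum_of_fintype _
  have hfacts : ∀ A : Finset E,
      Γ.kAll ≤ (Γ.restrict (A : Set E)).kAll ∧ Γ.kAll ≤ Nat.card V ∧
      Nat.card V ≤ A.card + (Γ.restrict (A : Set E)).kb ∧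
      (Γ.restrict (A : Set E)).kAll =
        (Γ.restrict (A : Set E)).kb + (Γ.restrict (A : Set E)).ku := by
    intro A
    refine ⟨Γ.kAll_le_kAll_restrict _, Γ.kAll_le_card, ?_,
      ((Γ.restrict (A : Set E)).kb_add_ku).symm⟩
    have h := (Γ.restrict (A : Set E)).card_le_card_add_kb
    rwa [Nat.card_coe_set_eq, Set.ncard_coe_finset] at h
  constructor
  · have hL : (Nat.card {f : V → ℤ // Γ.IsProperNColoring n f} : ℚ) =
        ((Nat.card {f : V → ℤ // (∀ v, |f v| ≤ (n : ℤ)) ∧ (fun _ => True) f ∧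
          ∀ e : E, f (Γ.ends e).1 ≠ (Γ.sign e : ℤ) * f (Γ.ends e).2}) : ℚ) := by
      congr 1
      apply Nat.card_congr
      apply Equiv.subtypeEquivRight
      intro f
      simp only [SGraph.IsProperNColoring]
      tauto
    rw [hL, Γ.incl_excl n (fun _ => True), hTutte, Finset.mul_sum]
    apply Finset.sum_congr rfl
    intro A _
    obtain ⟨hf1, hf2, hf3, hf4⟩ := hfacts A
    have hNA : Nat.card {f : V → ℤ // (∀ v, |f v| ≤ (n : ℤ)) ∧ (fun _ => True) f ∧
        ∀ e ∈ A, f (Γ.ends e).1 = (Γ.sign e : ℤ) * f (Γ.ends e).2} =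
        (2 * n + 1) ^ (Γ.restrict (A : Set E)).kb := by
      rw [← (Γ.restrict (A : Set E)).card_bounded_harm n]
      apply Nat.card_congr
      apply Equiv.subtypeEquivRight
      intro f
      constructor
      · rintro ⟨hb, -, h3⟩
        exact ⟨hb, (Γ.harmOn_iff A f).mp h3⟩
      · rintro ⟨hb, h2⟩
        exact ⟨hb, trivial, (Γ.harmOn_iff A f).mpr h2⟩
    rw [hNA]
    push_cast
    rw [show (-(2 * (n : ℚ)) - 1) = -(2 * (n : ℚ) + 1) from by ring,
      show ((0 : ℚ) - 1) = -1 from by norm_num,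
      show (2 * (n : ℚ) / (2 * (n : ℚ) + 1) - 1) = -(2 * (n : ℚ) + 1)⁻¹ from by
        field_simp; ring]
    exact (alg1 _ hq0 _ _ _ _ _ _ hf2 hf1 hf3 hf4).symm
  · have hL : (Nat.card {f : V → ℤ // Γ.IsProperNColoring n f ∧ ∀ v : V, f v ≠ 0} : ℚ) =
        ((Nat.card {f : V → ℤ // (∀ v, |f v| ≤ (n : ℤ)) ∧ (fun g : V → ℤ => ∀ v, g v ≠ 0) f ∧
          ∀ e : E, f (Γ.ends e).1 ≠ (Γ.sign e : ℤ) * f (Γ.ends e).2}) : ℚ) := by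
      congr 1
      apply Nat.card_congr
      apply Equiv.subtypeEquivRight
      intro f
      simp only [SGraph.IsProperNColoring]
      tauto
    rw [hL, Γ.incl_excl n (fun g : V → ℤ => ∀ v, g v ≠ 0), hTutte, Finset.mul_sum]
    apply Finset.sum_congr rfl
    intro A _
    obtain ⟨hf1, hf2, hf3, hf4⟩ := hfacts A
    by_cases hku : (Γ.restrict (A : Set E)).ku = 0
    · have hNA : Nat.card {f : V → ℤ // (∀ v, |f v| ≤ (n : ℤ)) ∧
          (fun g : V → ℤ => ∀ v, g v ≠ 0) f ∧
          ∀ e ∈ A, f (Γ.ends e).1 = (Γ.sign e : ℤ) * f (Γ.ends e).2} =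
          (2 * n) ^ (Γ.restrict (A : Set E)).kb := by
        rw [← (Γ.restrict (A : Set E)).card_bounded_harm_nonzero_pos n hku]
        apply Nat.card_congr
        apply Equiv.subtypeEquivRight
        intro f
        constructor
        · rintro ⟨hb, h2, h3⟩
          exact ⟨hb, (Γ.harmOn_iff A f).mp h3, h2⟩
        · rintro ⟨hb, h2, h3⟩
          exact ⟨hb, h3, (Γ.harmOn_iff A f).mpr h2⟩
      rw [hNA, hku, pow_zero, mul_one]
      push_cast
      rw [show (1 - 2 * (n : ℚ) - 1) = -(2 * (n : ℚ)) from by ring,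
        show ((0 : ℚ) - 1) = -1 from by norm_num]
      have h4 : (Γ.restrict (A : Set E)).kAll = (Γ.restrict (A : Set E)).kb := by
        clear * - hf4 hku
        omega
      exact (alg2 (2 * (n : ℚ)) hp0 (Nat.card V) Γ.kAll ((Γ.restrict (A : Set E)).kAll)
        ((Γ.restrict (A : Set E)).kb) A.card hf2 hf1 hf3 h4).symm
    · have hNA : Nat.card {f : V → ℤ // (∀ v, |f v| ≤ (n : ℤ)) ∧
          (fun g : V → ℤ => ∀ v, g v ≠ 0) f ∧
          ∀ e ∈ A, f (Γ.ends e).1 = (Γ.sign e : ℤ) * f (Γ.ends e).2} = 0 := by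
        rw [← (Γ.restrict (A : Set E)).card_bounded_harm_nonzero_zero n hku]
        apply Nat.card_congr
        apply Equiv.subtypeEquivRight
        intro f
        constructor
        · rintro ⟨hb, h2, h3⟩
          exact ⟨hb, (Γ.harmOn_iff A f).mp h3, h2⟩
        · rintro ⟨hb, h2, h3⟩
          exact ⟨hb, h3, (Γ.harmOn_iff A f).mpr h2⟩
      rw [hNA, show ((1 : ℚ) - 1) = 0 from by norm_num, zero_pow hku]
      push_cast
      ring

end Statement
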